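/- If X is an infinite-dimensional Archimedean vector lattice, then there exists a net in X that is uo-convergent to 0 (uo-null) but is not eventually order bounded in X. -/

import Mathlib

/-- A net `x : ι → X` (indexed by a preordered set `ι`) *order converges* (`o`-converges)
to `l ∈ X` if there is a net `y : Γ → X` over a nonempty directed set `Γ` which decreases
to `0` (i.e. `y` is antitone and `inf_γ y γ = 0`) such that for every `γ` there is an index
`α₀` with `|x α - l| ≤ y γ` for all `α ≥ α₀`. -/
def OConvergesTo {X : Type u} [Lattice X] [AddCommGroup X]
    {ι : Type v} [Preorder ι] (x : ι → X) (l : X) : Prop :=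
  ∃ (Γ : Type u) (_ : Preorder Γ) (_ : Nonempty Γ),
    IsDirected Γ (· ≤ ·) ∧
    ∃ y : Γ → X, Antitone y ∧ IsGLB (Set.range y) 0 ∧
      ∀ γ : Γ, ∃ α₀ : ι, ∀ α : ι, α₀ ≤ α → |x α - l| ≤ y γ

/-- A net `x : ι → X` is *unbounded order convergent* (`uo`-convergent) to `l ∈ X` if
`|x α - l| ⊓ y` order converges to `0` for every `y ≥ 0`. -/
def UOConvergesTo {X : Type u} [Lattice X] [AddCommGroup X]
    {ι : Type v} [Preorder ι] (x : ι → X) (l : X) : Prop :=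
  ∀ y : X, 0 ≤ y → OConvergesTo (fun α => |x α - l| ⊓ y) (0 : X)

/-- A net `x : ι → X` is *eventually order bounded* if there are `α₀ ∈ ι` and `b ∈ X`
with `|x α| ≤ b` for all `α ≥ α₀`. -/
def EventuallyOrderBounded {X : Type u} [Lattice X] [AddCommGroup X]
    {ι : Type v} [Preorder ι] (x : ι → X) : Prop :=
  ∃ (α₀ : ι) (b : X), ∀ α : ι, α₀ ≤ α → |x α| ≤ b

/-- A vector lattice is *Archimedean* if `n • x ≤ y` for all `n : ℕ` implies `x ≤ 0`. -/
def ArchimedeanVL (X : Type u) [Lattice X] [AddCommGroup X] : Prop :=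
  ∀ x y : X, (∀ n : ℕ, n • x ≤ y) → x ≤ 0

section Aux
variable {X : Type*} [AddCommGroup X] [Lattice X]
  [CovariantClass X X (· + ·) (· ≤ ·)] [Module ℝ X] [PosSMulMono ℝ X]

lemma rsmul_le_rsmul {s t : ℝ} (h : s ≤ t) {e : X} (he : 0 ≤ e) : s • e ≤ t • e := by
  have h0 : 0 ≤ (t - s) • e := smul_nonneg (by linarith) he
  have := add_le_add_left h0 (s • e)
  simpa [sub_smul] using this

lemma le_zero_of_smul_le_zero {s : ℝ} (hs : 0 < s) {e : X} (h : s • e ≤ 0) : e ≤ 0 := by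
  have := smul_le_smul_of_nonneg_left h (le_of_lt (by positivity : (0:ℝ) < s⁻¹))
  simpa [smul_smul, inv_mul_cancel₀ (ne_of_gt hs)] using this

lemma scalar_le_of_smul_le_smul {s t : ℝ} {e : X} (he : 0 ≤ e) (hne : e ≠ 0)
    (h : s • e ≤ t • e) : s ≤ t := by
  by_contra hlt
  push_neg at hlt
  have h1 : (s - t) • e ≤ 0 := by
    have := sub_le_sub_right h (t • e)
    simpa [sub_smul] using this
  have := le_zero_of_smul_le_zero (by linarith) h1
  exact hne (le_antisymm this he)

lemma smul_inf_eq {c : ℝ} (hc : 0 < c) (a b : X) : c • (a ⊓ b) = (c • a) ⊓ (c • b) := by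
  apply le_antisymm
  · exact le_inf (smul_le_smul_of_nonneg_left inf_le_left hc.le)
      (smul_le_smul_of_nonneg_left inf_le_right hc.le)
  · have h1 : c⁻¹ • ((c • a) ⊓ (c • b)) ≤ a ⊓ b := by
      apply le_inf
      · have := smul_le_smul_of_nonneg_left (inf_le_left (a := c • a) (b := c • b))
          (le_of_lt (by positivity : (0:ℝ) < c⁻¹))
        simpa [smul_smul, inv_mul_cancel₀ hc.ne'] using this
      · have := smul_le_smul_of_nonneg_left (inf_le_right (a := c • a) (b := c • b))
          (le_of_lt (by positivity : (0:ℝ) < c⁻¹))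
        simpa [smul_smul, inv_mul_cancel₀ hc.ne'] using this
    have := smul_le_smul_of_nonneg_left h1 hc.le
    simpa [smul_smul, mul_inv_cancel₀ hc.ne'] using this

lemma disj_smul {a b : X} (ha : 0 ≤ a) (hb : 0 ≤ b) (hab : a ⊓ b = 0)
    {s t : ℝ} (hs : 0 ≤ s) (ht : 0 ≤ t) : (s • a) ⊓ (t • b) = 0 := by
  set m : ℝ := max s t + 1 with hm
  have hm0 : 0 < m := by positivity
  have h1 : (s • a) ⊓ (t • b) ≤ (m • a) ⊓ (m • b) :=
    inf_le_inf (rsmul_le_rsmul (by simp [hm]; nlinarith [le_max_left s t]) ha)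
      (rsmul_le_rsmul (by simp [hm]; nlinarith [le_max_right s t]) hb)
  have h2 : (m • a) ⊓ (m • b) = 0 := by rw [← smul_inf_eq hm0, hab, smul_zero]
  have h3 : 0 ≤ (s • a) ⊓ (t • b) := le_inf (smul_nonneg hs ha) (smul_nonneg ht hb)
  exact le_antisymm (h2 ▸ h1) h3

lemma add_inf_disj {a b c : X} (ha : 0 ≤ a) (hb : 0 ≤ b) (hc : 0 ≤ c)
    (hac : a ⊓ c = 0) (hbc : b ⊓ c = 0) : (a + b) ⊓ c = 0 := by
  set z := (a + b) ⊓ c with hz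
  have hz1 : z - a ≤ b := sub_le_iff_le_add'.2 inf_le_left
  have hz2 : z - a ≤ c := le_trans (sub_le_self _ ha) inf_le_right
  have hz3 : z - a ≤ 0 := hbc ▸ le_inf hz1 hz2
  have hz4 : z ≤ a := by simpa using sub_nonpos.mp hz3
  have hz5 : z ≤ 0 := hac ▸ le_inf hz4 inf_le_right
  exact le_antisymm hz5 (le_inf (add_nonneg ha hb) hc)

/-- for disjoint nonneg elements, sum equals sup -/
lemma disj_add_eq_sup {a b : X} (hab : a ⊓ b = 0) : a + b = a ⊔ b := by
  have := inf_add_sup a b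
  rw [hab, zero_add] at this
  exact this.symm

lemma add_le_of_disj {a b x : X} (hab : a ⊓ b = 0) (hax : a ≤ x) (hbx : b ≤ x) :
    a + b ≤ x := by rw [disj_add_eq_sup hab]; exact sup_le hax hbx

/-- Archimedean, restated with real scalars. -/
lemma arch_real (hArch : ArchimedeanVL X) {v y : X} (h : ∀ n : ℕ, (n : ℝ) • v ≤ y) : v ≤ 0 :=
  hArch v y (fun n => by rw [← Nat.cast_smul_eq_nsmul ℝ n v]; exact h n)

end Aux

section Split
variable {X : Type*} [AddCommGroup X] [Lattice X]
  [CovariantClass X X (· + ·) (· ≤ ·)] [Module ℝ X] [PosSMulMono ℝ X]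

/-- `e` can be split into two disjoint nonzero positive pieces below it. -/
def Splittable (e : X) : Prop :=
  ∃ a b : X, 0 ≤ a ∧ a ≠ 0 ∧ 0 ≤ b ∧ b ≠ 0 ∧ a ≤ e ∧ b ≤ e ∧ a ⊓ b = 0

/-- An infinite disjoint sequence of nonzero positive elements. -/
def DisjSeq (d : ℕ → X) : Prop :=
  (∀ k, 0 ≤ d k ∧ d k ≠ 0) ∧ ∀ i j, i ≠ j → d i ⊓ d j = 0

lemma exists_disjSeq_of_all_splittable {x : X} (hx : 0 ≤ x) (hx0 : x ≠ 0)
    (hall : ∀ e : X, 0 ≤ e → e ≠ 0 → e ≤ x → Splittable e) :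
    ∃ d : ℕ → X, DisjSeq d := by
  -- the subtype of candidates
  let T := {e : X // 0 ≤ e ∧ e ≠ 0 ∧ e ≤ x}
  have split : ∀ e : T, ∃ p : T × T, (p.1.1 ≤ e.1) ∧ (p.2.1 ≤ e.1) ∧ p.1.1 ⊓ p.2.1 = 0 := by
    rintro ⟨e, he0, hene, hex⟩
    obtain ⟨a, b, ha0, hane, hb0, hbne, hae, hbe, hab⟩ := hall e he0 hene hex
    exact ⟨⟨⟨a, ha0, hane, hae.trans hex⟩, ⟨b, hb0, hbne, hbe.trans hex⟩⟩, hae, hbe, hab⟩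
  choose f hf1 hf2 hf3 using split
  -- E k : the remaining piece
  let E : ℕ → T := fun k => Nat.rec ⟨x, hx, hx0, le_refl x⟩ (fun _ e => (f e).2) k
  have hEsucc : ∀ k, (E (k+1)).1 ≤ (E k).1 := fun k => hf2 (E k)
  have hEmono : ∀ i j, i ≤ j → (E j).1 ≤ (E i).1 := by
    intro i j hij
    induction j with
    | zero => simp_all
    | succ j ih =>
      rcases Nat.lt_or_ge i (j+1) with h | h
      · exact (hEsucc j).trans (ih (Nat.lt_succ_iff.mp h))
      · have : i = j + 1 := le_antisymm hij h
        simp [this]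
  refine ⟨fun k => (f (E k)).1.1, ⟨fun k => ⟨(f (E k)).1.2.1, (f (E k)).1.2.2.1⟩, ?_⟩⟩
  have key : ∀ i j, i < j → (f (E i)).1.1 ⊓ (f (E j)).1.1 = 0 := by
    intro i j hij
    have h1 : (f (E j)).1.1 ≤ (E (i+1)).1 := (hf1 (E j)).trans ((hEmono (i+1) j hij).trans (le_refl _))
    have h2 : (f (E i)).1.1 ⊓ (f (E j)).1.1 ≤ (f (E i)).1.1 ⊓ (f (E i)).2.1 :=
      inf_le_inf_left _ h1
    rw [hf3 (E i)] at h2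
    exact le_antisymm h2 (le_inf (f (E i)).1.2.1 (f (E j)).1.2.1)
  intro i j hij
  rcases Nat.lt_or_ge i j with h | h
  · exact key i j h
  · rw [inf_comm]; exact key j i (lt_of_le_of_ne h (Ne.symm hij))

end Split

section Holder
variable {X : Type*} [AddCommGroup X] [Lattice X]
  [CovariantClass X X (· + ·) (· ≤ ·)] [Module ℝ X] [PosSMulMono ℝ X]

/-- below a multiple of an unsplittable element, disjoint nonneg pairs have a zero member -/
lemma unsplittable_disj {e : X} (he : 0 ≤ e) (hu : ¬ Splittable e)
    {a b : X} (ha : 0 ≤ a) (hb : 0 ≤ b) (hab : a ⊓ b = 0)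
    {M : ℝ} (hM : 0 < M) (haM : a ≤ M • e) (hbM : b ≤ M • e) : a = 0 ∨ b = 0 := by
  by_contra hcon
  push_neg at hcon
  apply hu
  refine ⟨M⁻¹ • a, M⁻¹ • b, smul_nonneg (by positivity) ha, ?_, smul_nonneg (by positivity) hb, ?_, ?_, ?_, ?_⟩
  · intro h
    apply hcon.1
    have := congrArg (fun z => M • z) h
    simpa [smul_smul, mul_inv_cancel₀ hM.ne'] using this
  · intro h
    apply hcon.2
    have := congrArg (fun z => M • z) h
    simpa [smul_smul, mul_inv_cancel₀ hM.ne'] using this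
  · have := smul_le_smul_of_nonneg_left haM (le_of_lt (by positivity : (0:ℝ) < M⁻¹))
    simpa [smul_smul, inv_mul_cancel₀ hM.ne'] using this
  · have := smul_le_smul_of_nonneg_left hbM (le_of_lt (by positivity : (0:ℝ) < M⁻¹))
    simpa [smul_smul, inv_mul_cancel₀ hM.ne'] using this
  · exact disj_smul ha hb hab (by positivity) (by positivity)

lemma holder (hArch : ArchimedeanVL X) {e : X} (he : 0 ≤ e) (hene : e ≠ 0)
    (hu : ¬ Splittable e) {z : X} (hz : 0 ≤ z) {N : ℝ} (hN : 0 ≤ N) (hzN : z ≤ N • e) :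
    ∃ t : ℝ, 0 ≤ t ∧ z = t • e := by
  classical
  set S : Set ℝ := {s : ℝ | 0 ≤ s ∧ s • e ≤ z} with hS
  have hS0 : (0:ℝ) ∈ S := ⟨le_refl 0, by simpa using hz⟩
  have hSbdd : BddAbove S := by
    by_contra hb
    have : ∀ n : ℕ, (n:ℝ) • e ≤ z := by
      intro n
      obtain ⟨s, hsS, hs⟩ := not_bddAbove_iff.mp hb (n:ℝ)
      exact (rsmul_le_rsmul hs.le he).trans hsS.2
    have he0 : e ≤ 0 := arch_real hArch this
    exact hene (le_antisymm he0 he)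
  set t : ℝ := sSup S with ht
  have ht0 : 0 ≤ t := le_csSup hSbdd hS0
  -- every element of S gives s • e ≤ z
  -- first: t • e ≤ z
  have hte : t • e ≤ z := by
    have key : ∀ n : ℕ, (n:ℝ) • (t • e - z) ≤ e := by
      intro n
      rcases Nat.eq_zero_or_pos n with h | h
      · simpa [h] using he
      · have hn : (0:ℝ) < (n:ℝ) := by exact_mod_cast h
        obtain ⟨s, hsS, hs⟩ := exists_lt_of_lt_csSup ⟨0, hS0⟩
          (show t - (n:ℝ)⁻¹ < t by have := inv_pos.mpr hn; linarith)
        have h1 : (t - (n:ℝ)⁻¹) • e ≤ z := (rsmul_le_rsmul hs.le he).trans hsS.2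
        have h2 : t • e - z ≤ (n:ℝ)⁻¹ • e := by
          have := sub_le_sub_right h1 ((t - (n:ℝ)⁻¹) • e - ((n:ℝ)⁻¹ • e))
          calc t • e - z = (t - (n:ℝ)⁻¹) • e + (n:ℝ)⁻¹ • e - z := by
                rw [sub_smul]; abel
            _ ≤ (n:ℝ)⁻¹ • e := by
                have := sub_le_sub_right h1 z
                simp only [sub_self] at this
                calc (t - (n:ℝ)⁻¹) • e + (n:ℝ)⁻¹ • e - z
                    = ((t - (n:ℝ)⁻¹) • e - z) + (n:ℝ)⁻¹ • e := by abel
                  _ ≤ 0 + (n:ℝ)⁻¹ • e := add_le_add_left this _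
                  _ = (n:ℝ)⁻¹ • e := zero_add _
        have := smul_le_smul_of_nonneg_left h2 hn.le
        simpa [smul_smul, mul_inv_cancel₀ hn.ne'] using this
    have := arch_real hArch key
    simpa [sub_nonpos] using this
  set r : X := z - t • e with hr
  have hr0 : 0 ≤ r := by simpa [hr, sub_nonneg] using hte
  -- now show r = 0; if not, we can improve t
  by_cases hrz : r = 0
  · exact ⟨t, ht0, by rw [← sub_eq_zero]; exact hrz⟩
  exfalso
  have hrN : r ≤ N • e := le_trans (by simpa [hr] using sub_le_self z (smul_nonneg ht0 he)) hzN
  -- find n with e ≤ n • r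
  have hex : ∃ n : ℕ, ¬ ((n:ℝ) • r ≤ e) := by
    by_contra hall
    push_neg at hall
    exact hrz (le_antisymm (arch_real hArch hall) hr0)
  obtain ⟨n, hn⟩ := hex
  have hn0 : (0:ℝ) < (n:ℝ) := by
    rcases Nat.eq_zero_or_pos n with h | h
    · exfalso; apply hn; simpa [h] using he
    · exact_mod_cast h
  -- pair ((n•r - e)⁺, (e - n•r)⁺) is disjoint and below a multiple of e
  set v : X := (n:ℝ) • r - e with hv
  have hab : v⁺ ⊓ v⁻ = 0 := posPart_inf_negPart_eq_zero v
  have hnr0 : 0 ≤ (n:ℝ) • r := smul_nonneg hn0.le hr0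
  have haM : v⁺ ≤ ((n:ℝ) * N) • e := by
    have h1 : v⁺ ≤ ((n:ℝ) • r)⁺ := posPart_mono (by simpa [hv] using sub_le_self ((n:ℝ) • r) he)
    have h2 : ((n:ℝ) • r)⁺ = (n:ℝ) • r := posPart_eq_self.mpr hnr0
    rw [h2] at h1
    refine h1.trans ?_
    have := smul_le_smul_of_nonneg_left hrN hn0.le
    simpa [smul_smul] using this
  have hbM : v⁻ ≤ (1:ℝ) • e := by
    have h1 : v⁻ = (e - (n:ℝ) • r)⁺ := by rw [negPart_def, posPart_def, hv]; abel_nf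
    have h2 : (e - (n:ℝ) • r)⁺ ≤ e⁺ := posPart_mono (sub_le_self e hnr0)
    rw [h1, one_smul]
    exact h2.trans (le_of_eq (posPart_eq_self.mpr he))
  set M : ℝ := max ((n:ℝ) * N) 1 with hM
  have hM0 : (0:ℝ) < M := lt_of_lt_of_le one_pos (le_max_right _ _)
  have hdisj := unsplittable_disj he hu (posPart_nonneg v) (negPart_nonneg v) hab hM0
    (haM.trans (rsmul_le_rsmul (le_max_left _ _) he))
    (hbM.trans (rsmul_le_rsmul (le_max_right _ _) he))
  rcases hdisj with h | h
  · -- v ≤ 0, i.e. n • r ≤ e: contradicts hn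
    exact hn (by simpa [hv, sub_nonpos] using posPart_eq_zero.mp h)
  · -- e ≤ n • r, so t + 1/n ∈ S, contradiction with sSup
    have h1 : e ≤ (n:ℝ) • r := by
      have : v⁻ = (e - (n:ℝ) • r)⁺ := by rw [negPart_def, posPart_def, hv]; abel_nf
      rw [this] at h
      simpa [sub_nonpos] using posPart_eq_zero.mp h
    have h2 : (t + (n:ℝ)⁻¹) • e ≤ z := by
      have h3 : (n:ℝ)⁻¹ • e ≤ r := by
        have := smul_le_smul_of_nonneg_left h1 (inv_pos.mpr hn0).le
        simpa [smul_smul, inv_mul_cancel₀ hn0.ne'] using this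
      calc (t + (n:ℝ)⁻¹) • e = t • e + (n:ℝ)⁻¹ • e := add_smul t _ e
        _ ≤ t • e + r := add_le_add_right h3 _
        _ = z := by rw [hr]; abel
    have h4 : t + (n:ℝ)⁻¹ ∈ S := ⟨by positivity, h2⟩
    have h5 : t + (n:ℝ)⁻¹ ≤ t := le_csSup hSbdd h4
    have h6 : (0:ℝ) < (n:ℝ)⁻¹ := inv_pos.mpr hn0
    exact absurd h5 (by clear hn; linarith)

end Holder

section Main
variable {X : Type*} [AddCommGroup X] [Lattice X]
  [CovariantClass X X (· + ·) (· ≤ ·)] [Module ℝ X] [PosSMulMono ℝ X]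

lemma my_sum_nonneg {ι : Type*} (F : Finset ι) (g : ι → X)
    (h : ∀ i ∈ F, 0 ≤ g i) : (0:X) ≤ ∑ i ∈ F, g i := by
  classical
  induction F using Finset.induction with
  | empty => simp
  | @insert a F ha ih =>
    rw [Finset.sum_insert ha]
    exact add_nonneg (h a (Finset.mem_insert_self a F))
      (ih (fun i hi => h i (Finset.mem_insert_of_mem hi)))

lemma sum_inf_disj {ι : Type*} (F : Finset ι) (g : ι → X) {c : X} (hc : 0 ≤ c)
    (h : ∀ i ∈ F, 0 ≤ g i ∧ g i ⊓ c = 0) : (∑ i ∈ F, g i) ⊓ c = 0 := by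
  classical
  induction F using Finset.induction with
  | empty => simp [le_antisymm (inf_le_left (b := c)) (le_inf (le_refl (0:X)) hc)]
  | @insert a F ha ih =>
    rw [Finset.sum_insert ha]
    have hsum0 : 0 ≤ ∑ i ∈ F, g i :=
      my_sum_nonneg F g (fun i hi => (h i (Finset.mem_insert_of_mem hi)).1)
    exact add_inf_disj (h a (Finset.mem_insert_self a F)).1 hsum0 hc
      (h a (Finset.mem_insert_self a F)).2
      (ih (fun i hi => h i (Finset.mem_insert_of_mem hi)))

lemma sum_le_of_pairwise_disj {ι : Type*} (F : Finset ι) (g : ι → X) {x : X} (hx : 0 ≤ x)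
    (h : ∀ i ∈ F, 0 ≤ g i ∧ g i ≤ x)
    (hd : ∀ i ∈ F, ∀ j ∈ F, i ≠ j → g i ⊓ g j = 0) : (∑ i ∈ F, g i) ≤ x := by
  classical
  induction F using Finset.induction with
  | empty => simpa using hx
  | @insert a F ha ih =>
    rw [Finset.sum_insert ha]
    have hdisj : (g a) ⊓ (∑ i ∈ F, g i) = 0 := by
      rw [inf_comm]
      refine sum_inf_disj F g (h a (Finset.mem_insert_self a F)).1 (fun i hi => ?_)
      refine ⟨(h i (Finset.mem_insert_of_mem hi)).1, ?_⟩
      exact hd i (Finset.mem_insert_of_mem hi) a (Finset.mem_insert_self a F)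
        (fun hia => ha (hia ▸ hi))
    exact add_le_of_disj hdisj (h a (Finset.mem_insert_self a F)).2
      (ih (fun i hi => h i (Finset.mem_insert_of_mem hi))
          (fun i hi j hj hij => hd i (Finset.mem_insert_of_mem hi) j
            (Finset.mem_insert_of_mem hj) hij))

/-- If there is no infinite disjoint sequence, every nonzero positive element dominates
an unsplittable nonzero positive element. -/
lemma exists_unsplittable (hn : ¬ ∃ d : ℕ → X, DisjSeq d) {x : X} (hx : 0 ≤ x) (hx0 : x ≠ 0) :
    ∃ e : X, 0 ≤ e ∧ e ≠ 0 ∧ e ≤ x ∧ ¬ Splittable e := by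
  by_contra hcon
  push_neg at hcon
  exact hn (exists_disjSeq_of_all_splittable hx hx0
    (fun e he hene hex => hcon e he hene hex))

/-- Key structural result: no infinite disjoint sequence implies finite dimensionality. -/
lemma finiteDimensional_of_no_disjSeq (hArch : ArchimedeanVL X)
    (hn : ¬ ∃ d : ℕ → X, DisjSeq d) : FiniteDimensional ℝ X := by
  classical
  -- Zorn: a maximal pairwise-disjoint family of unsplittable positive nonzero elements
  set 𝒜 : Set (Set X) := {S | (∀ e ∈ S, 0 ≤ e ∧ e ≠ 0 ∧ ¬ Splittable e) ∧
    S.Pairwise (fun a b => a ⊓ b = 0)} with h𝒜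
  obtain ⟨M, hM𝒜, hMmax⟩ : ∃ M ∈ 𝒜, ∀ S ∈ 𝒜, M ⊆ S → S = M := by
    have hchainub : ∀ c ⊆ 𝒜, IsChain (· ⊆ ·) c → ∃ ub ∈ 𝒜, ∀ s ∈ c, s ⊆ ub := by
      intro c hc hchain
      refine ⟨⋃₀ c, ⟨?_, ?_⟩, fun s hs => Set.subset_sUnion_of_mem hs⟩
      · rintro e ⟨S, hS, heS⟩
        exact (hc hS).1 e heS
      · rintro a ⟨S, hS, haS⟩ b ⟨T, hT, hbT⟩ hab
        rcases hchain.total hS hT with h | h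
        · exact (hc hT).2 (h haS) hbT hab
        · exact (hc hS).2 haS (h hbT) hab
    obtain ⟨M, hMx⟩ := zorn_subset 𝒜 hchainub
    exact ⟨M, hMx.1, fun S hS hsub => subset_antisymm (hMx.2 hS hsub) hsub⟩
  -- M is finite
  have hMfin : M.Finite := by
    by_contra hinfM
    apply hn
    have : M.Infinite := hinfM
    obtain f := this.natEmbedding
    refine ⟨fun k => (f k).1, fun k => ⟨(hM𝒜.1 _ (f k).2).1, (hM𝒜.1 _ (f k).2).2.1⟩, ?_⟩
    intro i j hij
    exact hM𝒜.2 (f i).2 (f j).2 (fun h => hij (f.injective (Subtype.ext h)))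
  -- every nonneg element is in the span of M
  have hspan : ∀ x : X, 0 ≤ x → x ∈ Submodule.span ℝ M := by
    intro x hx
    set F := hMfin.toFinset with hF
    -- coefficients
    have hcoef : ∀ e ∈ F, BddAbove {s : ℝ | 0 ≤ s ∧ s • e ≤ x} ∧ (0:ℝ) ∈ {s : ℝ | 0 ≤ s ∧ s • e ≤ x} := by
      intro e heF
      have heM : e ∈ M := hMfin.mem_toFinset.mp heF
      obtain ⟨he0, hene, -⟩ := hM𝒜.1 e heM
      constructor
      · by_contra hb
        have hle : ∀ n : ℕ, (n:ℝ) • e ≤ x := by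
          intro n
          obtain ⟨s, hsS, hs⟩ := not_bddAbove_iff.mp hb (n:ℝ)
          exact (rsmul_le_rsmul hs.le he0).trans hsS.2
        exact hene (le_antisymm (arch_real hArch hle) he0)
      · exact ⟨le_refl 0, by simpa using hx⟩
    set t : X → ℝ := fun e => sSup {s : ℝ | 0 ≤ s ∧ s • e ≤ x} with htdef
    have ht0 : ∀ e ∈ F, 0 ≤ t e := fun e heF =>
      le_csSup (hcoef e heF).1 (hcoef e heF).2
    -- t e • e ≤ x
    have htle : ∀ e ∈ F, t e • e ≤ x := by
      intro e heF
      have heM : e ∈ M := hMfin.mem_toFinset.mp heF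
      obtain ⟨he0, hene, -⟩ := hM𝒜.1 e heM
      have key : ∀ n : ℕ, (n:ℝ) • (t e • e - x) ≤ e := by
        intro n
        rcases Nat.eq_zero_or_pos n with h | h
        · simpa [h] using he0
        · have hn : (0:ℝ) < (n:ℝ) := by exact_mod_cast h
          obtain ⟨s, hsS, hs⟩ := exists_lt_of_lt_csSup ⟨0, (hcoef e heF).2⟩
            (show t e - (n:ℝ)⁻¹ < t e by have := inv_pos.mpr hn; linarith)
          have h1 : (t e - (n:ℝ)⁻¹) • e ≤ x := (rsmul_le_rsmul hs.le he0).trans hsS.2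
          have h2 : t e • e - x ≤ (n:ℝ)⁻¹ • e := by
            have h3 := sub_le_sub_right h1 x
            simp only [sub_self] at h3
            calc t e • e - x = ((t e - (n:ℝ)⁻¹) • e - x) + (n:ℝ)⁻¹ • e := by
                  rw [sub_smul]; abel
              _ ≤ 0 + (n:ℝ)⁻¹ • e := add_le_add_left h3 _
              _ = (n:ℝ)⁻¹ • e := zero_add _
          have := smul_le_smul_of_nonneg_left h2 hn.le
          simpa [smul_smul, mul_inv_cancel₀ hn.ne'] using this
      have := arch_real hArch key
      simpa [sub_nonpos] using this
    -- pairwise disjointness of the scaled elements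
    have hgd : ∀ e ∈ F, ∀ f ∈ F, e ≠ f → (t e • e) ⊓ (t f • f) = 0 := by
      intro e heF f hfF hef
      exact disj_smul (hM𝒜.1 e (hMfin.mem_toFinset.mp heF)).1
        (hM𝒜.1 f (hMfin.mem_toFinset.mp hfF)).1
        (hM𝒜.2 (hMfin.mem_toFinset.mp heF) (hMfin.mem_toFinset.mp hfF) hef)
        (ht0 e heF) (ht0 f hfF)
    set w : X := x - ∑ e ∈ F, t e • e with hw
    have hw0 : 0 ≤ w := by
      rw [hw, sub_nonneg]
      exact sum_le_of_pairwise_disj F (fun e => t e • e) hx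
        (fun e heF => ⟨smul_nonneg (ht0 e heF) (hM𝒜.1 e (hMfin.mem_toFinset.mp heF)).1,
          htle e heF⟩) hgd
    -- w is disjoint from every e ∈ M
    have hwdisj : ∀ e ∈ F, w ⊓ e = 0 := by
      intro e heF
      have heM : e ∈ M := hMfin.mem_toFinset.mp heF
      obtain ⟨he0, hene, heuns⟩ := hM𝒜.1 e heM
      have hz0 : 0 ≤ w ⊓ e := le_inf hw0 he0
      have hze : w ⊓ e ≤ (1:ℝ) • e := by rw [one_smul]; exact inf_le_right
      obtain ⟨σ, hσ0, hσ⟩ := holder hArch he0 hene heuns hz0 zero_le_one hze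
      rcases eq_or_lt_of_le hσ0 with h | h
      · rw [hσ, ← h, zero_smul]
      · exfalso
        -- x ≥ (t e + σ) • e, contradicting sSup
        have h1 : t e • e + (w ⊓ e) ≤ x := by
          have h2 : (w ⊓ e) ≤ w := inf_le_left
          have h3 : t e • e ≤ ∑ f ∈ F, t f • f := by
            rw [← Finset.add_sum_erase F (fun f => t f • f) heF]
            refine le_add_of_nonneg_right ?_
            refine my_sum_nonneg _ _ (fun f hfF => ?_)
            have hfF' : f ∈ F := Finset.mem_of_mem_erase hfF
            exact smul_nonneg (ht0 f hfF') (hM𝒜.1 f (hMfin.mem_toFinset.mp hfF')).1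
          calc t e • e + (w ⊓ e) ≤ (∑ f ∈ F, t f • f) + w := add_le_add h3 h2
            _ = x := by rw [hw]; abel
        have h4 : (t e + σ) • e ≤ x := by
          rw [add_smul, ← hσ]; exact h1
        have h5 : t e + σ ≤ t e := le_csSup (hcoef e heF).1 ⟨by linarith [ht0 e heF], h4⟩
        linarith
    -- w must be zero by maximality
    have hwzero : w = 0 := by
      by_contra hwne
      obtain ⟨e', he'0, he'ne, he'w, he'uns⟩ := exists_unsplittable hn hw0 hwne
      have he'disj : ∀ e ∈ M, e' ⊓ e = 0 := by
        intro e heM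
        have h1 : e' ⊓ e ≤ w ⊓ e := inf_le_inf_right e he'w
        rw [hwdisj e (hMfin.mem_toFinset.mpr heM)] at h1
        exact le_antisymm h1 (le_inf he'0 (hM𝒜.1 e heM).1)
      have he'M : e' ∉ M := by
        intro h
        have := he'disj e' h
        simp at this
        exact he'ne (le_antisymm (this ▸ le_refl _) he'0) -- fix below
      have : insert e' M ∈ 𝒜 := by
        constructor
        · rintro e (rfl | heM)
          · exact ⟨he'0, he'ne, he'uns⟩
          · exact hM𝒜.1 e heM
        · intro a ha b hb hab
          rcases ha with rfl | haM
          · rcases hb with rfl | hbM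
            · exact absurd rfl hab
            · exact he'disj b hbM
          · rcases hb with rfl | hbM
            · rw [inf_comm]; exact he'disj a haM
            · exact hM𝒜.2 haM hbM hab
      have := hMmax _ this (Set.subset_insert e' M)
      exact he'M (this ▸ Set.mem_insert e' M)
    have : x = ∑ e ∈ F, t e • e := by
      have := hwzero
      rw [hw, sub_eq_zero] at this
      exact this
    rw [this]
    exact Submodule.sum_mem _ (fun e heF => Submodule.smul_mem _ _
      (Submodule.subset_span (hMfin.mem_toFinset.mp heF)))
  -- span is everything
  have hspan_top : Submodule.span ℝ M = ⊤ := by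
    rw [eq_top_iff]
    intro x _
    have h1 : x = (x ⊔ 0) - ((-x) ⊔ 0) := by
      have := posPart_sub_negPart x
      rw [posPart_def, negPart_def] at this
      exact this.symm
    rw [h1]
    exact Submodule.sub_mem _ (hspan _ le_sup_right) (hspan _ le_sup_right)
  have : (⊤ : Submodule ℝ X).FG := by
    rw [← hspan_top]
    exact ⟨hMfin.toFinset, by rw [hMfin.coe_toFinset]⟩
  exact Module.finite_def.mpr this

end Main

section Net
variable {X : Type*} [AddCommGroup X] [Lattice X]
  [CovariantClass X X (· + ·) (· ≤ ·)] [Module ℝ X] [PosSMulMono ℝ X]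

lemma nsmul_nonneg' {a : X} (ha : 0 ≤ a) (n : ℕ) : 0 ≤ n • a := by
  rw [← Nat.cast_smul_eq_nsmul ℝ n a]
  exact smul_nonneg (by positivity) ha

lemma u_disj {d : ℕ → X} (hd : DisjSeq d) {y : X} (hy : 0 ≤ y)
    {k j : ℕ} (hkj : k ≠ j) (n m : ℕ) :
    ((n • d k) ⊓ y) ⊓ ((m • d j) ⊓ y) = 0 := by
  have h1 : ((n • d k) ⊓ y) ⊓ ((m • d j) ⊓ y) ≤ (n • d k) ⊓ (m • d j) :=
    inf_le_inf inf_le_left inf_le_left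
  have h2 : (n • d k) ⊓ (m • d j) = 0 := by
    rw [← Nat.cast_smul_eq_nsmul ℝ n (d k), ← Nat.cast_smul_eq_nsmul ℝ m (d j)]
    exact disj_smul (hd.1 k).1 (hd.1 j).1 (hd.2 k j hkj) (by positivity) (by positivity)
  refine le_antisymm (h2 ▸ h1) ?_
  exact le_inf (le_inf (nsmul_nonneg' (hd.1 k).1 n) hy) (le_inf (nsmul_nonneg' (hd.1 j).1 m) hy)

theorem main_construction (hArch : ArchimedeanVL X) (d : ℕ → X) (hd : DisjSeq d) :
    ∃ (ι : Type) (_ : Preorder ι) (_ : Nonempty ι),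
      IsDirected ι (· ≤ ·) ∧
      ∃ x : ι → X, UOConvergesTo x 0 ∧ ¬ EventuallyOrderBounded x := by
  classical
  refine ⟨ℕ × ℕ, Preorder.lift Prod.fst, ⟨(0,0)⟩, ⟨fun a b => ⟨(max a.1 b.1, 0), ?_, ?_⟩⟩,
    fun p => p.2 • d p.1, ?_, ?_⟩
  · exact le_max_left a.1 b.1
  · exact le_max_right a.1 b.1
  · -- uo-convergence
    intro y hy
    set u : ℕ → ℕ → X := fun k n => (n • d k) ⊓ y with hu
    have hu0 : ∀ k n, 0 ≤ u k n := fun k n => le_inf (nsmul_nonneg' (hd.1 k).1 n) hy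
    have huy : ∀ k n, u k n ≤ y := fun k n => inf_le_right
    set P : X → Prop := fun v => ∃ K : ℕ, ∀ k, K ≤ k → ∀ n : ℕ, u k n ≤ v with hP
    refine ⟨{v : X // P v}, Preorder.lift (fun v => OrderDual.toDual v.val),
      ⟨⟨y, 0, fun k _ n => huy k n⟩⟩, ?_, fun v => v.val, ?_, ?_, ?_⟩
    · -- directed
      refine ⟨fun v w => ?_⟩
      obtain ⟨Kv, hKv⟩ := v.2
      obtain ⟨Kw, hKw⟩ := w.2
      refine ⟨⟨v.1 ⊓ w.1, max Kv Kw, fun k hk n => le_inf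
        (hKv k (le_trans (le_max_left _ _) hk) n)
        (hKw k (le_trans (le_max_right _ _) hk) n)⟩, ?_, ?_⟩
      · show OrderDual.toDual v.val ≤ OrderDual.toDual (v.1 ⊓ w.1)
        exact inf_le_left
      · show OrderDual.toDual w.val ≤ OrderDual.toDual (v.1 ⊓ w.1)
        exact inf_le_right
    · -- antitone
      intro v w hvw
      exact hvw
    · -- IsGLB
      constructor
      · rintro _ ⟨v, rfl⟩
        obtain ⟨K, hK⟩ := v.2
        have := hK K (le_refl K) 0
        simpa [hu, inf_eq_left.mpr hy] using this
      · rintro c hc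
        have hcle : ∀ v : X, P v → c ≤ v := by
          rintro v hv
          exact hc ⟨⟨v, hv⟩, rfl⟩
        have key : ∀ N : ℕ, ∀ k n, u k n ≤ y - N • c := by
          intro N
          induction N with
          | zero => intro k n; simpa using huy k n
          | succ N ih =>
            intro j m
            have hvP : P ((y - N • c) - u j m) := by
              refine ⟨j + 1, fun k hk n => ?_⟩
              have hkj : k ≠ j := by omega
              have hadd : u k n + u j m ≤ y - N • c :=
                add_le_of_disj (u_disj hd hy hkj n m) (ih k n) (ih j m)
              exact le_sub_iff_add_le.mpr hadd
            have := hcle _ hvP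
            have h2 : u j m ≤ y - N • c - c := by
              have h3 := sub_le_sub_left this ((y - N • c))
              calc u j m = (y - N • c) - ((y - N • c) - u j m) := by abel
                _ ≤ (y - N • c) - c := sub_le_sub_left this _
            calc u j m ≤ y - N • c - c := h2
              _ = y - (N + 1) • c := by rw [succ_nsmul]; abel
        have harch : ∀ n : ℕ, n • c ≤ y := by
          intro n
          cases n with
          | zero => simpa using hy
          | succ m =>
            have h1 : P (y - m • c) := ⟨0, fun k _ j => key m k j⟩
            have h2 := hcle _ h1
            calc (m+1) • c = c + m • c := by rw [succ_nsmul]; abel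
              _ ≤ (y - m • c) + m • c := add_le_add_left h2 _
              _ = y := by abel
        exact hArch c y harch
    · -- tails
      rintro ⟨v, K, hK⟩
      refine ⟨(K, 0), ?_⟩
      rintro ⟨k, n⟩ hα
      have hk : K ≤ k := hα
      have h1 : |(n • d k : X) - 0| = n • d k := by
        rw [sub_zero]; exact abs_of_nonneg (nsmul_nonneg' (hd.1 k).1 n)
      show |(|(n • d k : X) - 0| ⊓ y) - 0| ≤ v
      rw [h1, sub_zero, abs_of_nonneg (hu0 k n)]
      exact hK k hk n
  · -- not eventually order bounded
    rintro ⟨⟨k₀, n₀⟩, b, hb⟩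
    have h1 : ∀ n : ℕ, n • d k₀ ≤ b := by
      intro n
      have := hb (k₀, n) (le_refl k₀)
      rwa [abs_of_nonneg (nsmul_nonneg' (hd.1 k₀).1 n)] at this
    have := hArch (d k₀) b h1
    exact (hd.1 k₀).2 (le_antisymm this (hd.1 k₀).1)

end Net

/-- In an infinite-dimensional Archimedean vector lattice there is a uo-null net which is
not eventually order bounded. -/
theorem exists_uoNull_net_not_eventuallyOrderBounded
    {X : Type u} [AddCommGroup X] [Lattice X]
    [CovariantClass X X (· + ·) (· ≤ ·)] [Module ℝ X] [PosSMulMono ℝ X]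
    (hArch : ArchimedeanVL X) (hinf : ¬ FiniteDimensional ℝ X) :
    ∃ (ι : Type) (_ : Preorder ι) (_ : Nonempty ι),
      IsDirected ι (· ≤ ·) ∧
      ∃ x : ι → X, UOConvergesTo x 0 ∧ ¬ EventuallyOrderBounded x := by
  by_cases hds : ∃ d : ℕ → X, DisjSeq d
  · obtain ⟨d, hd⟩ := hds
    exact main_construction hArch d hd
  · exact absurd (finiteDimensional_of_no_disjSeq hArch hds) hinf
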